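/- Let t and d be positive integers and let w^1, …, w^t ∈ ℝ^d. Define f : Δ_t → ℝ by f(x) = ‖ Σ_{i=1}^t x_i w^i ‖_2. Then f is 2-anti-concentrated: for every c ∈ (0,1), the uniform measure μ_t of the set { x ∈ Δ_t : f(x) < c · max_{z ∈ Δ_t} f(z) } is at most 2 t c. -/

import Mathlib

open MeasureTheory
open scoped ENNReal NNReal

noncomputable section

/-- The standard simplex `Δ_d = {x ∈ ℝ^d : ∑ x_i = 1, x ≥ 0}` inside Euclidean space. -/
def stdSimplexE (d : ℕ) : Set (EuclideanSpace ℝ (Fin d)) :=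
  {x | (∀ i, 0 ≤ x i) ∧ ∑ i, x i = 1}

/-- The uniform probability measure `μ_d` on the standard simplex: the `(d-1)`-dimensional
Hausdorff measure restricted to the simplex and normalized to total mass one. -/
def simplexUniform (d : ℕ) : Measure (EuclideanSpace ℝ (Fin d)) :=
  (μH[(d : ℝ) - 1] (stdSimplexE d))⁻¹ • (μH[(d : ℝ) - 1]).restrict (stdSimplexE d)

private lemma aux_pow_sub_pow (n : ℕ) {a b : ℝ} (hb : 0 ≤ b) (hba : b ≤ a) :
    a ^ (n + 1) - b ^ (n + 1) ≤ (n + 1) * a ^ n * (a - b) := by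
  induction n with
  | zero => simp
  | succ n ih =>
    have ha : 0 ≤ a := hb.trans hba
    have h1 : b ^ (n + 1) ≤ a ^ (n + 1) := pow_le_pow_left₀ hb hba _
    have e : a ^ (n + 2) - b ^ (n + 2) = a * (a ^ (n + 1) - b ^ (n + 1)) + (a - b) * b ^ (n + 1) := by
      ring
    have h2 : a * (a ^ (n + 1) - b ^ (n + 1)) + (a - b) * b ^ (n + 1)
        ≤ a * ((n + 1) * a ^ n * (a - b)) + (a - b) * a ^ (n + 1) :=
      add_le_add (mul_le_mul_of_nonneg_left ih ha)
        (mul_le_mul_of_nonneg_left h1 (sub_nonneg.mpr hba))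
    have h3 : a * ((n + 1) * a ^ n * (a - b)) + (a - b) * a ^ (n + 1)
        = ((n + 1 : ℕ) + 1 : ℝ) * a ^ (n + 1) * (a - b) := by
      push_cast; ring
    calc a ^ (n + 1 + 1) - b ^ (n + 1 + 1)
        = a * (a ^ (n + 1) - b ^ (n + 1)) + (a - b) * b ^ (n + 1) := e
      _ ≤ a * ((n + 1) * a ^ n * (a - b)) + (a - b) * a ^ (n + 1) := h2
      _ = ((n + 1 : ℕ) + 1 : ℝ) * a ^ (n + 1) * (a - b) := h3

set_option maxHeartbeats 2000000 in
theorem distance_function_anti_concentrated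
    (t d : ℕ) (ht : 0 < t) (hd : 0 < d)
    (w : Fin t → EuclideanSpace ℝ (Fin d))
    (c : ℝ) (hc : c ∈ Set.Ioo (0 : ℝ) 1) :
    simplexUniform t
        {x | ‖∑ i, x i • w i‖ <
          c * sSup ((fun x : EuclideanSpace ℝ (Fin t) => ‖∑ i, x i • w i‖) '' stdSimplexE t)} ≤
      ENNReal.ofReal (2 * t * c) := by
  obtain ⟨hc0, hc1⟩ := hc
  set f : EuclideanSpace ℝ (Fin t) → ℝ := fun x => ‖∑ i, x i • w i‖ with hfdef
  set Δ := stdSimplexE t with hΔdef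
  set M := sSup (f '' Δ) with hMdef
  set μ := (μH[(t : ℝ) - 1] : Measure (EuclideanSpace ℝ (Fin t))) with hμdef
  -- linearity of the underlying map
  have hL : ∀ (a b : ℝ) (x y : EuclideanSpace ℝ (Fin t)),
      ∑ i, (a • x + b • y) i • w i =
        a • (∑ i, x i • w i) + b • (∑ i, y i • w i) := by
    intro a b x y
    rw [Finset.smul_sum, Finset.smul_sum, ← Finset.sum_add_distrib]
    refine Finset.sum_congr rfl fun i _ => ?_
    simp only [PiLp.add_apply, PiLp.smul_apply, smul_eq_mul]
    rw [add_smul, mul_smul, mul_smul]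
  -- continuity of f
  have hfc : Continuous f := by
    apply Continuous.norm
    exact continuous_finset_sum _ fun i _ =>
      ((EuclideanSpace.proj i : EuclideanSpace ℝ (Fin t) →L[ℝ] ℝ).continuous).smul
        continuous_const
  -- the simplex is closed
  have hΔclosed : IsClosed Δ := by
    have : Δ = (⋂ i, {x : EuclideanSpace ℝ (Fin t) | 0 ≤ x i}) ∩
        {x : EuclideanSpace ℝ (Fin t) | ∑ i, x i = 1} := by
      ext x; simp [hΔdef, stdSimplexE, Set.mem_iInter]
    rw [this]
    exact (isClosed_iInter fun i =>
        isClosed_le continuous_const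
          (EuclideanSpace.proj i : EuclideanSpace ℝ (Fin t) →L[ℝ] ℝ).continuous).inter
      (isClosed_eq (continuous_finset_sum _ fun i _ =>
        (EuclideanSpace.proj i : EuclideanSpace ℝ (Fin t) →L[ℝ] ℝ).continuous) continuous_const)
  -- the simplex is compact
  have hΔcomp : IsCompact Δ := by
    refine Metric.isCompact_of_isClosed_isBounded hΔclosed ?_
    refine (Metric.isBounded_closedBall (x := (0 : EuclideanSpace ℝ (Fin t))) (r := 1)).subset ?_
    intro x hx
    obtain ⟨hx0, hx1⟩ := hx
    have hn : ‖x‖ ≤ 1 := by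
      rw [EuclideanSpace.norm_eq]
      have h1 : ∑ i, ‖x i‖ ^ 2 ≤ 1 := by
        have he : ∑ i, ‖x i‖ ^ 2 = ∑ i, x i ^ 2 := by
          refine Finset.sum_congr rfl fun i _ => ?_
          rw [Real.norm_eq_abs, sq_abs]
        rw [he]
        calc ∑ i, x i ^ 2 ≤ (∑ i, x i) ^ 2 :=
              Finset.sum_sq_le_sq_sum_of_nonneg (fun i _ => hx0 i)
          _ = 1 := by rw [hx1]; norm_num
      calc Real.sqrt (∑ i, ‖x i‖ ^ 2) ≤ Real.sqrt 1 := Real.sqrt_le_sqrt h1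
        _ = 1 := Real.sqrt_one
    simpa [Metric.mem_closedBall, dist_eq_norm] using hn
  -- the simplex is nonempty
  have hΔne : Δ.Nonempty := by
    refine ⟨EuclideanSpace.single ⟨0, ht⟩ (1 : ℝ), ?_, ?_⟩
    · intro i
      rw [EuclideanSpace.single_apply]
      positivity
    · simp [EuclideanSpace.single_apply]
  -- the maximum is attained
  obtain ⟨z, hzΔ, hzmax⟩ := hΔcomp.exists_isMaxOn hΔne hfc.continuousOn
  have hub : ∀ y ∈ Δ, f y ≤ f z := hzmax
  have hMz : M = f z := by
    refine le_antisymm (csSup_le (hΔne.image f) ?_) (le_csSup ⟨f z, ?_⟩ ⟨z, hzΔ, rfl⟩)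
    · rintro _ ⟨y, hy, rfl⟩; exact hub y hy
    · rintro _ ⟨y, hy, rfl⟩; exact hub y hy
  have hM0 : 0 ≤ M := hMz ▸ norm_nonneg _
  -- the bad set
  set Bfull : Set (EuclideanSpace ℝ (Fin t)) := {x | f x < c * M} with hBfull
  set B : Set (EuclideanSpace ℝ (Fin t)) := Bfull ∩ Δ with hBdef
  have hBfullopen : IsOpen Bfull := isOpen_lt hfc continuous_const
  have hBmeas : MeasurableSet B := hBfullopen.measurableSet.inter hΔclosed.measurableSet
  -- reduce to bounding μ B
  have hfmeq : simplexUniform t Bfull = (μ Δ)⁻¹ * μ B := by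
    rw [simplexUniform, Measure.smul_apply, Measure.restrict_apply hBfullopen.measurableSet]
    rfl
  rw [hfmeq]
  -- trivial case : M = 0
  rcases eq_or_lt_of_le hM0 with hM | hM
  · have hBe : B = ∅ := by
      ext x
      simp only [hBdef, hBfull, Set.mem_inter_iff, Set.mem_setOf_eq, Set.mem_empty_iff_false,
        iff_false, not_and]
      intro hx
      exact absurd hx (not_lt.mpr (by rw [← hM, mul_zero]; exact norm_nonneg _))
    rw [hBe]
    simp
  -- main case
  set n : ℕ := t - 1 with hndef
  have htn : t = n + 1 := (Nat.succ_pred_eq_of_pos ht).symm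
  have hcast : (t : ℝ) - 1 = (n : ℝ) := by
    rw [htn]; push_cast; ring
  have hdim0 : (0 : ℝ) ≤ (t : ℝ) - 1 := by rw [hcast]; positivity
  -- the index bound
  set K : ℕ := Nat.ceil ((2 * c)⁻¹) - 1 with hKdef
  have h2c : (0 : ℝ) < 2 * c := by linarith
  have hceil : 1 ≤ Nat.ceil ((2 * c)⁻¹) := by
    rw [Nat.one_le_ceil_iff]
    positivity
  have hK1 : (1 : ℝ) ≤ 2 * c * (K + 1) := by
    have hcK : (K : ℝ) + 1 = (Nat.ceil ((2 * c)⁻¹) : ℝ) := by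
      rw [hKdef, Nat.cast_sub hceil]
      push_cast
      ring
    rw [hcK]
    have h := Nat.le_ceil ((2 * c)⁻¹)
    calc (1 : ℝ) = 2 * c * (2 * c)⁻¹ := by field_simp
      _ ≤ 2 * c * (Nat.ceil ((2 * c)⁻¹) : ℝ) := mul_le_mul_of_nonneg_left h (le_of_lt h2c)
  have hK2 : ∀ k : ℕ, k ≤ K → 2 * c * k < 1 := by
    intro k hk
    have hkK : (k : ℝ) ≤ (K : ℝ) := by exact_mod_cast hk
    have hKlt : (K : ℝ) < (2 * c)⁻¹ := by
      have hcK : (K : ℝ) = (Nat.ceil ((2 * c)⁻¹) : ℝ) - 1 := by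
        rw [hKdef, Nat.cast_sub hceil]; push_cast; ring
      rw [hcK]
      have := Nat.ceil_lt_add_one (le_of_lt (by positivity : (0:ℝ) < (2 * c)⁻¹))
      linarith
    calc 2 * c * k ≤ 2 * c * K := mul_le_mul_of_nonneg_left hkK (le_of_lt h2c)
      _ < 2 * c * (2 * c)⁻¹ := mul_lt_mul_of_pos_left hKlt h2c
      _ = 1 := by field_simp
  -- the homothety maps
  set T : ℕ → EuclideanSpace ℝ (Fin t) → EuclideanSpace ℝ (Fin t) :=
    fun k x => (1 - 2 * c * k) • x + (2 * c * k) • z with hTdef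
  set g : ℕ → EuclideanSpace ℝ (Fin t) → EuclideanSpace ℝ (Fin t) :=
    fun k y => (1 - 2 * c * k)⁻¹ • (y - (2 * c * k) • z) with hgdef
  set A : ℕ → Set (EuclideanSpace ℝ (Fin t)) := fun k => T k '' B with hAdef
  have hgT : ∀ k : ℕ, k ≤ K → ∀ x : EuclideanSpace ℝ (Fin t), g k (T k x) = x := by
    intro k hk x
    have h1 : (1 : ℝ) - 2 * c * k ≠ 0 := by have := hK2 k hk; linarith
    simp only [hTdef, hgdef]
    rw [add_sub_cancel_right, smul_smul, inv_mul_cancel₀ h1, one_smul]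
  have hTg : ∀ k : ℕ, k ≤ K → ∀ y : EuclideanSpace ℝ (Fin t), T k (g k y) = y := by
    intro k hk y
    have h1 : (1 : ℝ) - 2 * c * k ≠ 0 := by have := hK2 k hk; linarith
    simp only [hTdef, hgdef]
    rw [smul_smul, mul_inv_cancel₀ h1, one_smul, sub_add_cancel]
  -- A k as a preimage, hence measurable
  have hApre : ∀ k : ℕ, k ≤ K → A k = g k ⁻¹' B := by
    intro k hk
    ext y
    constructor
    · rintro ⟨x, hx, rfl⟩
      rwa [Set.mem_preimage, hgT k hk x]
    · intro hy
      exact ⟨g k y, hy, hTg k hk y⟩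
  have hgc : ∀ k : ℕ, Continuous (g k) := by
    intro k
    exact (((continuous_id (X := EuclideanSpace ℝ (Fin t))).sub continuous_const).const_smul ((1 - 2 * c * k)⁻¹ : ℝ))
  have hAmeas : ∀ k : ℕ, k ≤ K → MeasurableSet (A k) := by
    intro k hk
    rw [hApre k hk]
    exact hBmeas.preimage (hgc k).measurable
  -- A k lands in the simplex
  have hAsub : ∀ k : ℕ, k ≤ K → A k ⊆ Δ := by
    intro k hk
    rintro _ ⟨x, ⟨_, hxΔ⟩, rfl⟩
    have hσ0 : (0 : ℝ) ≤ 2 * c * k := by positivity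
    have hσ1 : 2 * c * k < 1 := hK2 k hk
    obtain ⟨hx0, hx1⟩ := hxΔ
    obtain ⟨hz0, hz1⟩ := hzΔ
    constructor
    · intro i
      simp only [hTdef, PiLp.add_apply, PiLp.smul_apply, smul_eq_mul]
      have h1 := mul_nonneg (by linarith : (0:ℝ) ≤ 1 - 2 * c * k) (hx0 i)
      have h2 := mul_nonneg hσ0 (hz0 i)
      linarith
    · simp only [hTdef, PiLp.add_apply, PiLp.smul_apply, smul_eq_mul]
      rw [Finset.sum_add_distrib, ← Finset.mul_sum, ← Finset.mul_sum, hx1, hz1]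
      ring
  -- value bounds for f on A k
  have hfT_lower : ∀ k : ℕ, k ≤ K → ∀ x ∈ B,
      2 * c * k * M - (1 - 2 * c * k) * (c * M) < f (T k x) := by
    intro k hk x hx
    obtain ⟨hxB, hxΔ⟩ := hx
    have hσ1 : 2 * c * k < 1 := hK2 k hk
    have hfx : f x < c * M := hxB
    have key : 2 * c * k * M - (1 - 2 * c * k) * f x ≤ f (T k x) := by
      have hexp : ∑ i, (T k x) i • w i =
          (1 - 2 * c * k) • (∑ i, x i • w i) + (2 * c * k) • (∑ i, z i • w i) :=
        hL _ _ x z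
      show 2 * c * k * M - (1 - 2 * c * k) * f x ≤ ‖∑ i, (T k x) i • w i‖
      rw [hexp]
      set u := (1 - 2 * c * k) • (∑ i, x i • w i) with hu
      set v := (2 * c * k) • (∑ i, z i • w i) with hv
      have h1 : ‖v‖ ≤ ‖u + v‖ + ‖u‖ := by
        calc ‖v‖ = ‖(u + v) - u‖ := by congr 1; abel
          _ ≤ ‖u + v‖ + ‖u‖ := norm_sub_le _ _
      have h2 : ‖v‖ = 2 * c * k * M := by
        rw [hv, norm_smul, Real.norm_eq_abs, abs_of_nonneg (by positivity), hMz]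
      have h3 : ‖u‖ = (1 - 2 * c * k) * f x := by
        rw [hu, norm_smul, Real.norm_eq_abs, abs_of_nonneg (by linarith)]
      linarith
    have hstrict : (1 - 2 * c * k) * f x < (1 - 2 * c * k) * (c * M) :=
      mul_lt_mul_of_pos_left hfx (by linarith)
    linarith
  have hfT_upper : ∀ k : ℕ, k ≤ K → ∀ x ∈ B,
      f (T k x) < (1 - 2 * c * k) * (c * M) + 2 * c * k * M := by
    intro k hk x hx
    obtain ⟨hxB, hxΔ⟩ := hx
    have hσ1 : 2 * c * k < 1 := hK2 k hk
    have hfx : f x < c * M := hxB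
    have hexp : ∑ i, (T k x) i • w i =
        (1 - 2 * c * k) • (∑ i, x i • w i) + (2 * c * k) • (∑ i, z i • w i) :=
      hL _ _ x z
    show ‖∑ i, (T k x) i • w i‖ < _
    rw [hexp]
    calc ‖(1 - 2 * c * k) • (∑ i, x i • w i) + (2 * c * k) • (∑ i, z i • w i)‖
        ≤ ‖(1 - 2 * c * k) • (∑ i, x i • w i)‖ + ‖(2 * c * k) • (∑ i, z i • w i)‖ :=
          norm_add_le _ _
      _ = (1 - 2 * c * k) * f x + 2 * c * k * M := by
          rw [norm_smul, norm_smul, Real.norm_eq_abs, Real.norm_eq_abs,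
            abs_of_nonneg (by linarith : (0:ℝ) ≤ 1 - 2 * c * k),
            abs_of_nonneg (by positivity : (0:ℝ) ≤ 2 * c * (k:ℝ)), hMz]
      _ < (1 - 2 * c * k) * (c * M) + 2 * c * k * M := by
          have : (1 - 2 * c * k) * f x < (1 - 2 * c * k) * (c * M) :=
            mul_lt_mul_of_pos_left hfx (by linarith)
          linarith
  -- pairwise disjointness
  have hdisj : (↑(Finset.range (K + 1)) : Set ℕ).PairwiseDisjoint A := by
    have core : ∀ j k : ℕ, j < k → k ≤ K → Disjoint (A j) (A k) := by
      intro j k hjk hkK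
      have hjK : j ≤ K := le_of_lt (lt_of_lt_of_le hjk hkK)
      rw [Set.disjoint_left]
      rintro u ⟨x, hxB, rfl⟩ ⟨y, hyB, hyu⟩
      have h1 : f (T j x) < (1 - 2 * c * j) * (c * M) + 2 * c * j * M :=
        hfT_upper j hjK x hxB
      have h2 : 2 * c * k * M - (1 - 2 * c * k) * (c * M) < f (T k y) :=
        hfT_lower k hkK y hyB
      rw [hyu] at h2
      have hjk' : (j : ℝ) + 1 ≤ (k : ℝ) := by exact_mod_cast hjk
      have hcM : (0 : ℝ) ≤ c * M := le_of_lt (mul_pos hc0 hM)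
      have h4 : (0:ℝ) ≤ (c * M) * ((k:ℝ) - (j:ℝ) - 1) := mul_nonneg hcM (by linarith)
      have h5 : (0:ℝ) ≤ (c * M) * (c * ((j:ℝ) + (k:ℝ))) := mul_nonneg hcM (by positivity)
      nlinarith [h1, h2, h4, h5]
    intro j hj k hk hjk
    simp only [Finset.coe_range, Set.mem_Iio] at hj hk
    rcases lt_or_gt_of_ne hjk with h | h
    · exact core j k h (Nat.lt_succ_iff.mp hk)
    · exact (core k j h (Nat.lt_succ_iff.mp hj)).symm
  -- measure lower bound for each A k
  have hmeaslb : ∀ k : ℕ, k ≤ K →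
      ENNReal.ofReal ((1 - 2 * c * k) ^ n) * μ B ≤ μ (A k) := by
    intro k hk
    have hσ1 : 2 * c * k < 1 := hK2 k hk
    have hσpos : (0 : ℝ) < 1 - 2 * c * k := by linarith
    -- g k is Lipschitz with constant (1 - 2ck)⁻¹
    have hlip : LipschitzWith ((1 - 2 * c * (k:ℝ))⁻¹).toNNReal (g k) := by
      apply LipschitzWith.of_dist_le_mul
      intro a b
      have : g k a - g k b = (1 - 2 * c * k)⁻¹ • (a - b) := by
        simp only [hgdef]
        rw [← smul_sub]
        congr 1
        abel
      rw [dist_eq_norm, dist_eq_norm, this, norm_smul, Real.norm_eq_abs,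
        abs_of_nonneg (by positivity : (0:ℝ) ≤ (1 - 2 * c * (k:ℝ))⁻¹)]
      rw [Real.coe_toNNReal _ (by positivity : (0:ℝ) ≤ (1 - 2 * c * (k:ℝ))⁻¹)]
    have himg : g k '' (A k) = B := by
      rw [hAdef]
      simp only []
      rw [Set.image_image]
      have : ∀ x ∈ B, g k (T k x) = x := fun x _ => hgT k hk x
      rw [Set.image_congr this]; simp
    have hmain := hlip.hausdorffMeasure_image_le hdim0 (A k)
    rw [himg] at hmain
    -- hmain : μ B ≤ (↑κ)^(t-1) * μ (A k)  with κ = (1-2ck)⁻¹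
    have hcoe : (((1 - 2 * c * (k:ℝ))⁻¹).toNNReal : ℝ≥0∞) =
        (ENNReal.ofReal (1 - 2 * c * k))⁻¹ := by
      rw [← ENNReal.ofReal_inv_of_pos hσpos]
      rfl
    rw [hcoe] at hmain
    have hP0 : ENNReal.ofReal (1 - 2 * c * k) ≠ 0 :=
      (ENNReal.ofReal_pos.mpr hσpos).ne'
    have hPtop : ENNReal.ofReal (1 - 2 * c * k) ≠ ⊤ := ENNReal.ofReal_ne_top
    have hrw : ENNReal.ofReal ((1 - 2 * c * k) ^ n) =
        ENNReal.ofReal (1 - 2 * c * k) ^ ((t:ℝ) - 1) := by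
      rw [ENNReal.ofReal_rpow_of_nonneg (le_of_lt hσpos) hdim0, hcast,
        Real.rpow_natCast]
    rw [hrw]
    calc ENNReal.ofReal (1 - 2 * c * k) ^ ((t:ℝ) - 1) * μ B
        ≤ ENNReal.ofReal (1 - 2 * c * k) ^ ((t:ℝ) - 1) *
            ((ENNReal.ofReal (1 - 2 * c * k))⁻¹ ^ ((t:ℝ) - 1) * μ (A k)) := by
          exact mul_le_mul_right hmain _
      _ = (ENNReal.ofReal (1 - 2 * c * k) ^ ((t:ℝ) - 1) *
            (ENNReal.ofReal (1 - 2 * c * k) ^ ((t:ℝ) - 1))⁻¹) * μ (A k) := by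
          rw [ENNReal.inv_rpow]; ring
      _ = μ (A k) := by
          rw [ENNReal.mul_inv_cancel (by
              exact (ENNReal.rpow_pos (lt_of_le_of_ne zero_le (Ne.symm hP0)) hPtop).ne')
            (by exact ENNReal.rpow_ne_top_of_nonneg hdim0 hPtop), one_mul]
  -- the union bound
  have hunion : ∑ k ∈ Finset.range (K + 1), μ (A k) ≤ μ Δ := by
    rw [← measure_biUnion_finset hdisj (fun k hk => hAmeas k (Nat.lt_succ_iff.mp
      (Finset.mem_range.mp hk)))]
    apply measure_mono
    intro u hu
    simp only [Set.mem_iUnion] at hu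
    obtain ⟨k, hk, hu⟩ := hu
    exact hAsub k (Nat.lt_succ_iff.mp (Finset.mem_range.mp hk)) hu
  -- the real sum bound
  set S : ℝ := ∑ k ∈ Finset.range (K + 1), (1 - 2 * c * k) ^ n with hSdef
  have hSlb : 1 ≤ 2 * c * t * S := by
    -- telescoping with clamped sequence
    set b : ℕ → ℝ := fun k => max (1 - 2 * c * k) 0 with hbdef
    have hb0 : b 0 = 1 := by simp [hbdef]
    have hbK : b (K + 1) = 0 := by
      simp only [hbdef]
      rw [max_eq_right]
      push_cast
      linarith
    have hterm : ∀ k : ℕ, k ≤ K →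
        b k ^ (n + 1) - b (k + 1) ^ (n + 1) ≤ (n + 1) * (1 - 2 * c * k) ^ n * (2 * c) := by
      intro k hk
      have hσ1 : 2 * c * k < 1 := hK2 k hk
      have hbk : b k = 1 - 2 * c * k := by
        simp only [hbdef]; rw [max_eq_left]; linarith
      have hble : b (k + 1) ≤ b k := by
        simp only [hbdef]
        apply max_le_max_right
        push_cast
        nlinarith
      have hbnn : 0 ≤ b (k + 1) := le_max_right _ _
      have hgap : b k - b (k + 1) ≤ 2 * c := by
        have h1 : 1 - 2 * c * (((k + 1 : ℕ)):ℝ) ≤ b (k + 1) := le_max_left _ _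
        push_cast at h1
        rw [hbk]
        linarith
      have haux := aux_pow_sub_pow n hbnn hble
      have hpow : (0:ℝ) ≤ b k ^ n := pow_nonneg (hbnn.trans hble) n
      calc b k ^ (n + 1) - b (k + 1) ^ (n + 1)
          ≤ (n + 1) * b k ^ n * (b k - b (k + 1)) := haux
        _ ≤ (n + 1) * b k ^ n * (2 * c) := by
            apply mul_le_mul_of_nonneg_left hgap
            positivity
        _ = (n + 1) * (1 - 2 * c * k) ^ n * (2 * c) := by rw [hbk]
    have htel : ∑ k ∈ Finset.range (K + 1), (b k ^ (n + 1) - b (k + 1) ^ (n + 1)) = 1 := by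
      rw [Finset.sum_range_sub' (fun k => b k ^ (n + 1))]
      rw [hb0, hbK]
      norm_num
    have hsum : 1 ≤ ∑ k ∈ Finset.range (K + 1), (n + 1 : ℝ) * (1 - 2 * c * k) ^ n * (2 * c) := by
      refine le_trans (le_of_eq htel.symm) (Finset.sum_le_sum ?_)
      intro k hk
      exact hterm k (Nat.lt_succ_iff.mp (Finset.mem_range.mp hk))
    calc (1:ℝ) ≤ ∑ k ∈ Finset.range (K + 1), (n + 1 : ℝ) * (1 - 2 * c * k) ^ n * (2 * c) := hsum
      _ = 2 * c * t * S := by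
          rw [hSdef, Finset.mul_sum]
          refine Finset.sum_congr rfl fun k _ => ?_
          rw [htn]
          push_cast
          ring
  have hSpos : 0 < S := by
    have httpos : (0:ℝ) < 2 * c * t := by
      have : (0:ℝ) < (t:ℝ) := by exact_mod_cast ht
      positivity
    nlinarith
  -- combine in ℝ≥0∞
  have hmajor : ENNReal.ofReal S * μ B ≤ μ Δ := by
    calc ENNReal.ofReal S * μ B
        = ∑ k ∈ Finset.range (K + 1), ENNReal.ofReal ((1 - 2 * c * k) ^ n) * μ B := by
          rw [← Finset.sum_mul, ← ENNReal.ofReal_sum_of_nonneg]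
          intro k hk
          have h9 := hK2 k (Nat.lt_succ_iff.mp (Finset.mem_range.mp hk))
          exact pow_nonneg (by linarith) n
      _ ≤ ∑ k ∈ Finset.range (K + 1), μ (A k) :=
          Finset.sum_le_sum fun k hk =>
            hmeaslb k (Nat.lt_succ_iff.mp (Finset.mem_range.mp hk))
      _ ≤ μ Δ := hunion
  -- final computation
  have hSinv : (ENNReal.ofReal S)⁻¹ ≤ ENNReal.ofReal (2 * t * c) := by
    rw [← ENNReal.ofReal_inv_of_pos hSpos]
    apply ENNReal.ofReal_le_ofReal
    rw [inv_le_iff_one_le_mul₀ hSpos]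
    calc (1:ℝ) ≤ 2 * c * t * S := hSlb
      _ = 2 * t * c * S := by ring
  have hS0 : ENNReal.ofReal S ≠ 0 := by
    simp [ENNReal.ofReal_eq_zero, not_le, hSpos]
  have hStop : ENNReal.ofReal S ≠ ⊤ := ENNReal.ofReal_ne_top
  calc (μ Δ)⁻¹ * μ B
      = (μ Δ)⁻¹ * ((ENNReal.ofReal S)⁻¹ * (ENNReal.ofReal S * μ B)) := by
        rw [← mul_assoc ((ENNReal.ofReal S)⁻¹), ENNReal.inv_mul_cancel hS0 hStop, one_mul]
    _ ≤ (μ Δ)⁻¹ * ((ENNReal.ofReal S)⁻¹ * μ Δ) := by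
        exact mul_le_mul_right (mul_le_mul_right hmajor _) _
    _ = (ENNReal.ofReal S)⁻¹ * ((μ Δ)⁻¹ * μ Δ) := by ring
    _ ≤ (ENNReal.ofReal S)⁻¹ * 1 := by
        apply mul_le_mul_right
        rcases eq_or_ne (μ Δ) 0 with h | h
        · simp [h]
        · rcases eq_or_ne (μ Δ) ⊤ with h' | h'
          · simp [h']
          · rw [ENNReal.inv_mul_cancel h h']
    _ = (ENNReal.ofReal S)⁻¹ := mul_one _
    _ ≤ ENNReal.ofReal (2 * t * c) := hSinv

end
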